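/- arXiv:1205.0045 — 4 statements merged into one kernel-verified Lean document; each statement's English description precedes it below -/
import Mathlib

section
/- Let k ∈ ℤ, let f : ℍ → ℂ be holomorphic, and let g = [[a,b],[c,d]] ∈ SL(2,ℝ). Define the weight-k slash (f|_k g)(z) = (c·z+d)^{−k}·f(gz), where gz = (a·z+b)/(c·z+d). Then the Shimura–Maass derivative of weight k intertwines with the slash action, raising the weight by 2: for every z ∈ ℍ, (1/(2πi))·[ (f|_k g)'(z) + k·(f|_k g)(z)/(z − conj(z)) ] = (c·z+d)^{−(k+2)} · (1/(2πi))·[ f'(gz) + k·f(gz)/(gz − conj(gz)) ]; that is, ∂_k(f|_k g) = (∂_k f)|_{k+2} g. -/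
open Complex

theorem shimuraMaass_slash_intertwine (k : ℤ) (f : ℂ → ℂ)
    (hf : ∀ z : ℂ, 0 < z.im → DifferentiableAt ℂ f z)
    (a b c d : ℝ) (hdet : a * d - b * c = 1)
    (z : ℂ) (hz : 0 < z.im) :
    (1 / (2 * (Real.pi : ℂ) * Complex.I)) *
        (deriv (fun ζ : ℂ => ((c : ℂ) * ζ + d) ^ (-k) *
            f (((a : ℂ) * ζ + b) / ((c : ℂ) * ζ + d))) z +
          (k : ℂ) * (((c : ℂ) * z + d) ^ (-k) *
            f (((a : ℂ) * z + b) / ((c : ℂ) * z + d))) / (z - (starRingEnd ℂ) z)) =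
      ((c : ℂ) * z + d) ^ (-(k + 2)) *
        ((1 / (2 * (Real.pi : ℂ) * Complex.I)) *
          (deriv f (((a : ℂ) * z + b) / ((c : ℂ) * z + d)) +
            (k : ℂ) * f (((a : ℂ) * z + b) / ((c : ℂ) * z + d)) /
              ((((a : ℂ) * z + b) / ((c : ℂ) * z + d)) -
                (starRingEnd ℂ) (((a : ℂ) * z + b) / ((c : ℂ) * z + d))))) := by
  have hdetC : (a : ℂ) * d - b * c = 1 := by exact_mod_cast congrArg Complex.ofReal hdet
  set j : ℂ := (c : ℂ) * z + d with hjdef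
  -- j ≠ 0
  have hjim : j.im = c * z.im := by simp [hjdef]
  have hj : j ≠ 0 := by
    rcases eq_or_ne c 0 with hc | hc
    · have hd : d ≠ 0 := by
        intro hd0; rw [hc, hd0] at hdet; simp at hdet
      simp [hjdef, hc, Complex.ext_iff, hd]
    · intro h0
      rw [h0] at hjim
      simp only [Complex.zero_im] at hjim
      have := mul_eq_zero.mp hjim.symm
      rcases this with h | h
      · exact hc h
      · exact (ne_of_gt hz) h
  -- w and its imaginary part
  set w : ℂ := ((a : ℂ) * z + b) / j with hwdef
  have hwim : w.im = z.im / Complex.normSq j := by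
    rw [hwdef, Complex.div_im]
    have h1 : ((a : ℂ) * z + b).im = a * z.im := by simp
    have h2 : ((a : ℂ) * z + b).re = a * z.re + b := by simp
    have h3 : j.re = c * z.re + d := by simp [hjdef]
    rw [h1, h2, h3, hjim, div_sub_div_same]
    congr 1
    linear_combination z.im * hdet
  have hw : 0 < w.im := by
    rw [hwim]; exact div_pos hz (Complex.normSq_pos.mpr hj)
  -- derivatives
  have hden : HasDerivAt (fun ζ : ℂ => (c : ℂ) * ζ + d) c z := by
    simpa using ((hasDerivAt_id z).const_mul (c : ℂ)).add_const (d : ℂ)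
  have hnum : HasDerivAt (fun ζ : ℂ => (a : ℂ) * ζ + b) a z := by
    simpa using ((hasDerivAt_id z).const_mul (a : ℂ)).add_const (b : ℂ)
  have hφ : HasDerivAt (fun ζ : ℂ => ((a : ℂ) * ζ + b) / ((c : ℂ) * ζ + d)) (1 / j ^ 2) z := by
    have h := hnum.div hden hj
    refine h.congr_deriv ?_
    rw [hjdef]
    congr 1
    linear_combination hdetC
  have hzp : HasDerivAt (fun x : ℂ => x ^ (-k)) (((-k : ℤ) : ℂ) * j ^ (-k - 1)) j :=
    hasDerivAt_zpow (-k) j (Or.inl hj)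
  have hpow : HasDerivAt (fun ζ : ℂ => ((c : ℂ) * ζ + d) ^ (-k))
      (((-k : ℤ) : ℂ) * j ^ (-k - 1) * c) z :=
    HasDerivAt.comp (h₂ := fun x : ℂ => x ^ (-k)) (h := fun ζ : ℂ => (c : ℂ) * ζ + d) z hzp hden
  have hfw : HasDerivAt f (deriv f w) w := (hf w hw).hasDerivAt
  have hcomp : HasDerivAt (fun ζ : ℂ => f (((a : ℂ) * ζ + b) / ((c : ℂ) * ζ + d)))
      (deriv f w * (1 / j ^ 2)) z := hfw.comp z hφ
  have hprod : HasDerivAt (fun ζ : ℂ => ((c : ℂ) * ζ + d) ^ (-k) *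
      f (((a : ℂ) * ζ + b) / ((c : ℂ) * ζ + d)))
      (((-k : ℤ) : ℂ) * j ^ (-k - 1) * c * f w + j ^ (-k) * (deriv f w * (1 / j ^ 2))) z :=
    hpow.mul hcomp
  rw [hprod.deriv]
  -- conjugate facts
  have hS : z - (starRingEnd ℂ) z ≠ 0 := by
    intro h0
    have h1 : (z - (starRingEnd ℂ) z).im = 2 * z.im := by
      simp [Complex.sub_im, Complex.conj_im]; ring
    rw [h0] at h1
    simp at h1
    linarith
  have hconjj : (starRingEnd ℂ) j = j - c * (z - (starRingEnd ℂ) z) := by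
    rw [hjdef]; simp [map_add, map_mul, Complex.conj_ofReal]; ring
  have hjb : j - (c : ℂ) * (z - (starRingEnd ℂ) z) ≠ 0 := by
    rw [← hconjj]; simpa using hj
  have hwdiff : w - (starRingEnd ℂ) w =
      (z - (starRingEnd ℂ) z) / (j * (j - c * (z - (starRingEnd ℂ) z))) := by
    have hcw : (starRingEnd ℂ) w = ((a : ℂ) * (starRingEnd ℂ) z + b) /
        ((c : ℂ) * (starRingEnd ℂ) z + d) := by
      rw [hwdef, hjdef]
      simp [map_add, map_mul, map_div₀, Complex.conj_ofReal]
    have hjb' : (c : ℂ) * (starRingEnd ℂ) z + d ≠ 0 := by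
      have h5 : ((c : ℂ) * z + d) - (c : ℂ) * (z - (starRingEnd ℂ) z) =
          (c : ℂ) * (starRingEnd ℂ) z + d := by ring
      rw [hjdef] at hjb; rwa [h5] at hjb
    have h6 : j - (c : ℂ) * (z - (starRingEnd ℂ) z) = (c : ℂ) * (starRingEnd ℂ) z + d := by
      rw [hjdef]; ring
    rw [hwdef, hcw, h6, div_sub_div _ _ hj hjb']
    congr 1
    rw [hjdef]
    linear_combination (z - (starRingEnd ℂ) z) * hdetC
  rw [hwdiff]
  -- zpow rewrites
  have e1 : j ^ (-k - 1) = j ^ (-k) / j := by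
    rw [zpow_sub_one₀ hj, ← div_eq_mul_inv]
  have e2 : j ^ (-(k + 2)) = j ^ (-k) / j ^ 2 := by
    rw [show -(k + 2) = -k - 1 - 1 by ring, zpow_sub_one₀ hj, zpow_sub_one₀ hj, mul_assoc, ← mul_inv, ← sq, ← div_eq_mul_inv]
  rw [e1, e2]
  have hπ : (Real.pi : ℂ) ≠ 0 := by exact_mod_cast Real.pi_ne_zero
  have hI : Complex.I ≠ 0 := Complex.I_ne_zero
  push_cast
  clear_value j w
  clear hconjj hwdiff e1 e2 hprod hcomp hfw hpow hzp hφ hnum hden hw hwim hwdef hjim hjdef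
  generalize f w = F
  generalize deriv f w = D
  generalize j ^ (-k) = A
  generalize hSdef : z - (starRingEnd ℂ) z = S at hS hjb ⊢
  field_simp [hj, hS, hjb, hπ, hI]
  ring
end

section
/- Let k ∈ ℤ and let f : ℍ → ℂ be holomorphic. Define the iterated Shimura–Maass derivatives ∂^n f recursively by ∂^0 f = f and ∂^{n+1} f = (1/(2πi))·(∂_z(∂^n f) + (k+2n)·(∂^n f)/(z − conj(z))), where ∂_z is the Wirtinger derivative. Then for every n ≥ 0 and every z ∈ ℍ, (∂^n f)(z) = Σ_{r=0}^{n} C(n,r) · (k+r)_{n−r} / (−4π·Im z)^{n−r} · f^{(r)}(z)/(2πi)^r. -/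
open Complex

/-- The Wirtinger derivative `∂_z = (1/2)(∂/∂x − i ∂/∂y)` of `f : ℂ → ℂ` at `z`. -/
noncomputable def wirtingerDeriv (f : ℂ → ℂ) (z : ℂ) : ℂ :=
  (1 / 2) * (fderiv ℝ f z 1 - Complex.I * fderiv ℝ f z Complex.I)

/-- The iterated Shimura–Maass derivative `∂^n f` of base weight `k`:
`∂^0 f = f` and `∂^{n+1} f = (1/(2πi)) (∂_z (∂^n f) + (k+2n) (∂^n f)/(z − conj z))`. -/
noncomputable def smIter (k : ℤ) (f : ℂ → ℂ) : ℕ → ℂ → ℂ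
  | 0 => f
  | n + 1 => fun z => (1 / (2 * (Real.pi : ℂ) * Complex.I)) *
      (wirtingerDeriv (smIter k f n) z +
        ((k : ℂ) + 2 * n) * smIter k f n z / (z - (starRingEnd ℂ) z))

theorem wirt_holo {f : ℂ → ℂ} {z : ℂ} (hf : DifferentiableAt ℂ f z) :
    wirtingerDeriv f z = deriv f z := by
  unfold wirtingerDeriv
  rw [hf.fderiv_restrictScalars (𝕜 := ℝ)]
  have h1 : (fderiv ℂ f z) 1 = deriv f z := by simp [fderiv_apply_one_eq_deriv]
  have hI : (fderiv ℂ f z) I = I * deriv f z := by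
    have := (fderiv ℂ f z).map_smul I 1
    simp only [smul_eq_mul, mul_one] at this
    rw [this, h1]
  simp only [ContinuousLinearMap.coe_restrictScalars', h1, hI]
  linear_combination (-1/2 * deriv f z) * Complex.I_sq

theorem wirt_congr {f g : ℂ → ℂ} {z : ℂ} (h : f =ᶠ[nhds z] g) :
    wirtingerDeriv f z = wirtingerDeriv g z := by
  unfold wirtingerDeriv; rw [h.fderiv_eq]

theorem wirt_mul {u v : ℂ → ℂ} {z : ℂ} (hu : DifferentiableAt ℝ u z)
    (hv : DifferentiableAt ℝ v z) :
    wirtingerDeriv (fun w => u w * v w) z =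
      wirtingerDeriv u z * v z + u z * wirtingerDeriv v z := by
  unfold wirtingerDeriv
  rw [fderiv_fun_mul hu hv]
  simp only [ContinuousLinearMap.add_apply, ContinuousLinearMap.smul_apply, smul_eq_mul]
  ring

theorem diffR_sub_conj (z : ℂ) :
    HasFDerivAt (fun w : ℂ => w - (starRingEnd ℂ) w)
      (ContinuousLinearMap.id ℝ ℂ - Complex.conjCLE.toContinuousLinearMap) z := by
  exact (hasFDerivAt_id z).sub (Complex.conjCLE.hasFDerivAt)

theorem wirt_comp_sub_conj {h : ℂ → ℂ} {z : ℂ}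
    (hh : DifferentiableAt ℂ h (z - (starRingEnd ℂ) z)) :
    wirtingerDeriv (fun w => h (w - (starRingEnd ℂ) w)) z
      = deriv h (z - (starRingEnd ℂ) z) := by
  have hc : HasFDerivAt (fun w : ℂ => h (w - (starRingEnd ℂ) w))
      (((fderiv ℂ h (z - (starRingEnd ℂ) z)).restrictScalars ℝ).comp
        (ContinuousLinearMap.id ℝ ℂ - Complex.conjCLE.toContinuousLinearMap)) z :=
    ((hh.hasFDerivAt.restrictScalars ℝ).comp z (diffR_sub_conj z))
  unfold wirtingerDeriv
  rw [hc.fderiv]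
  have h1 : (fderiv ℂ h (z - (starRingEnd ℂ) z)) 1 = deriv h (z - (starRingEnd ℂ) z) := by
    simp [fderiv_apply_one_eq_deriv]
  have hI : (fderiv ℂ h (z - (starRingEnd ℂ) z)) I = I * deriv h (z - (starRingEnd ℂ) z) := by
    have := (fderiv ℂ h (z - (starRingEnd ℂ) z)).map_smul I 1
    simp only [smul_eq_mul, mul_one] at this
    rw [this, h1]
  simp only [ContinuousLinearMap.comp_apply, ContinuousLinearMap.sub_apply,
    ContinuousLinearMap.id_apply, ContinuousLinearEquiv.coe_coe, Complex.conjCLE_apply,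
    ContinuousLinearMap.coe_restrictScalars', map_one, Complex.conj_I]
  rw [show (1 : ℂ) - 1 = 0 from by ring, show I - -I = I * (2:ℂ) from by ring]
  have h2 : (fderiv ℂ h (z - (starRingEnd ℂ) z)) (I * 2)
      = 2 * (fderiv ℂ h (z - (starRingEnd ℂ) z)) I := by
    have := (fderiv ℂ h (z - (starRingEnd ℂ) z)).map_smul (2:ℂ) I
    simpa [smul_eq_mul, mul_comm] using this
  rw [map_zero, h2, hI]
  linear_combination (-deriv h (z - (starRingEnd ℂ) z)) * Complex.I_sq

theorem wirt_sum {ι : Type*} (s : Finset ι) (F : ι → ℂ → ℂ) {z : ℂ}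
    (hF : ∀ i ∈ s, DifferentiableAt ℝ (F i) z) :
    wirtingerDeriv (fun w => ∑ i ∈ s, F i w) z = ∑ i ∈ s, wirtingerDeriv (F i) z := by
  unfold wirtingerDeriv
  rw [fderiv_fun_sum hF]
  simp only [ContinuousLinearMap.sum_apply, Finset.mul_sum, ← Finset.sum_sub_distrib]

theorem wirt_const_mul (c : ℂ) {u : ℂ → ℂ} {z : ℂ} (hu : DifferentiableAt ℝ u z) :
    wirtingerDeriv (fun w => c * u w) z = c * wirtingerDeriv u z := by
  unfold wirtingerDeriv
  rw [fderiv_const_mul hu c]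
  simp only [ContinuousLinearMap.smul_apply, smul_eq_mul]
  ring

-- differentiability of w ↦ (w - conj w)^m over ℝ, and its wirtinger deriv
theorem diffR_sub_conj_zpow {z : ℂ} (hz : z - (starRingEnd ℂ) z ≠ 0) (m : ℤ) :
    DifferentiableAt ℝ (fun w : ℂ => (w - (starRingEnd ℂ) w) ^ m) z := by
  have hh : DifferentiableAt ℂ (fun w : ℂ => w ^ m) (z - (starRingEnd ℂ) z) :=
    differentiableAt_zpow.mpr (Or.inl hz)
  exact (hh.restrictScalars ℝ).comp z (diffR_sub_conj z).differentiableAt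

theorem wirt_sub_conj_zpow {z : ℂ} (hz : z - (starRingEnd ℂ) z ≠ 0) (m : ℤ) :
    wirtingerDeriv (fun w : ℂ => (w - (starRingEnd ℂ) w) ^ m) z
      = (m : ℂ) * (z - (starRingEnd ℂ) z) ^ (m - 1) := by
  rw [wirt_comp_sub_conj (differentiableAt_zpow.mpr (Or.inl hz))]
  rw [deriv_zpow]

theorem wirt_term {g : ℂ → ℂ} {z : ℂ} (hz : z - (starRingEnd ℂ) z ≠ 0)
    (hg : DifferentiableAt ℂ g z) (m : ℤ) :
    wirtingerDeriv (fun w => g w * (w - (starRingEnd ℂ) w) ^ m) z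
      = deriv g z * (z - (starRingEnd ℂ) z) ^ m
        + g z * ((m : ℂ) * (z - (starRingEnd ℂ) z) ^ (m - 1)) := by
  rw [wirt_mul (hg.restrictScalars ℝ) (diffR_sub_conj_zpow hz m), wirt_holo hg,
    wirt_sub_conj_zpow hz m]

theorem analytic_iter {f : ℂ → ℂ} (hf : ∀ z : ℂ, 0 < z.im → DifferentiableAt ℂ f z)
    (r : ℕ) : AnalyticOnNhd ℂ (iteratedDeriv r f) {z : ℂ | 0 < z.im} := by
  have hop : IsOpen {z : ℂ | 0 < z.im} := by
    exact isOpen_lt continuous_const Complex.continuous_im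
  induction r with
  | zero =>
    rw [iteratedDeriv_zero]; exact
      (DifferentiableOn.analyticOnNhd (fun z hz => (hf z hz).differentiableWithinAt) hop)
  | succ n ih => rw [iteratedDeriv_succ]; exact ih.deriv

noncomputable def acoef (k : ℤ) (n r : ℕ) : ℂ :=
  (n.choose r : ℂ) * (ascPochhammer ℂ (n - r)).eval ((k : ℂ) + r)

theorem asc_succ_left_eval (m : ℕ) (x : ℂ) :
    (ascPochhammer ℂ (m + 1)).eval x = x * (ascPochhammer ℂ m).eval (x + 1) := by
  rw [ascPochhammer_succ_left]
  simp [Polynomial.eval_comp]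

theorem coeff0 (k : ℤ) (n : ℕ) : acoef k (n+1) 0 = acoef k n 0 * ((k:ℂ) + n) := by
  simp only [acoef, Nat.choose_zero_right, Nat.cast_one, one_mul, Nat.sub_zero,
    Nat.cast_zero, add_zero]
  rw [ascPochhammer_succ_eval]

theorem coeffsucc (k : ℤ) (n r : ℕ) (hr : r ≤ n) :
    acoef k (n+1) (r+1) = acoef k n r + acoef k n (r+1) * ((k:ℂ) + n + (r+1)) := by
  rcases eq_or_lt_of_le hr with h | h
  · subst h
    simp [acoef, Nat.choose_succ_self]
  · -- r < n, let m = n - r - 1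
    obtain ⟨m, hm⟩ : ∃ m, n = r + 1 + m := ⟨n - (r+1), by omega⟩
    subst hm
    have e1 : r + 1 + m + 1 - (r + 1) = m + 1 := by omega
    have e2 : r + 1 + m - r = m + 1 := by omega
    have e3 : r + 1 + m - (r + 1) = m := by omega
    simp only [acoef, e1, e2, e3]
    set x : ℂ := (k : ℂ) + (r + 1 : ℕ) with hx
    have hx' : (k : ℂ) + (r : ℕ) = x - 1 := by push_cast [hx]; ring
    rw [hx']
    have hL : (ascPochhammer ℂ (m+1)).eval (x - 1) = (x - 1) * (ascPochhammer ℂ m).eval x := by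
      rw [asc_succ_left_eval, sub_add_cancel]
    have hR : (ascPochhammer ℂ (m+1)).eval x = (ascPochhammer ℂ m).eval x * (x + m) :=
      ascPochhammer_succ_eval m x
    rw [hL, hR]
    have hpascal : ((r+1+m+1).choose (r+1) : ℂ)
        = ((r+1+m).choose r : ℂ) + ((r+1+m).choose (r+1) : ℂ) := by
      have : (r+1+m+1).choose (r+1) = (r+1+m).choose r + (r+1+m).choose (r+1) := by
        rw [show r+1+m+1 = (r+1+m)+1 by omega]; exact Nat.choose_succ_succ' _ _
      exact_mod_cast this
    have hkey : ((r+1+m).choose r : ℂ) * (m + 1) = ((r+1+m).choose (r+1) : ℂ) * (r + 1) := by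
      have := Nat.choose_succ_right_eq (r+1+m) r
      have h2 : r+1+m - r = m + 1 := by omega
      rw [h2] at this
      exact_mod_cast congrArg (Nat.cast : ℕ → ℂ) this.symm
    have hcoef : ((k:ℂ) + ((r+1+m : ℕ) : ℂ) + ((r:ℂ) + 1)) = x + m + (r + 1) := by
      push_cast [hx]; ring
    rw [hcoef, hpascal]
    linear_combination ((ascPochhammer ℂ m).eval x) * hkey

theorem subconj_ne {z : ℂ} (hz : 0 < z.im) : z - (starRingEnd ℂ) z ≠ 0 := by
  rw [Complex.sub_conj]
  apply mul_ne_zero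
  · simpa using by positivity
  · exact Complex.I_ne_zero

theorem mainU (k : ℤ) (f : ℂ → ℂ) (hf : ∀ z : ℂ, 0 < z.im → DifferentiableAt ℂ f z) :
    ∀ (n : ℕ) (z : ℂ), 0 < z.im →
      smIter k f n z =
        (∑ r ∈ Finset.range (n + 1),
            acoef k n r * iteratedDeriv r f z *
              (z - (starRingEnd ℂ) z) ^ ((r : ℤ) - (n : ℤ))) /
          (2 * (Real.pi : ℂ) * Complex.I) ^ n := by
  have hD : ∀ (r : ℕ) (z : ℂ), 0 < z.im → DifferentiableAt ℂ (iteratedDeriv r f) z :=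
    fun r z hz => (analytic_iter hf r z hz).differentiableAt
  intro n
  induction n with
  | zero =>
    intro z hz
    simp [acoef, smIter]
  | succ n ih =>
    intro z hz
    have hX : z - (starRingEnd ℂ) z ≠ 0 := subconj_ne hz
    set P : ℂ := 2 * (Real.pi : ℂ) * Complex.I with hPdef
    set X : ℂ := z - (starRingEnd ℂ) z with hXdef
    set V : ℂ → ℂ := fun w => ∑ r ∈ Finset.range (n + 1),
        (acoef k n r * iteratedDeriv r f w) * (w - (starRingEnd ℂ) w) ^ ((r : ℤ) - (n : ℤ))
      with hVdef
    have hterm_diff : ∀ r ∈ Finset.range (n + 1),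
        DifferentiableAt ℝ (fun w => (acoef k n r * iteratedDeriv r f w) *
          (w - (starRingEnd ℂ) w) ^ ((r : ℤ) - (n : ℤ))) z := by
      intro r _
      exact (((hD r z hz).const_mul _).restrictScalars ℝ).mul (diffR_sub_conj_zpow hX _)
    -- wirtinger of smIter n
    have hcongr : smIter k f n =ᶠ[nhds z] fun w => (P ^ n)⁻¹ * V w := by
      have hop : IsOpen {w : ℂ | 0 < w.im} := isOpen_lt continuous_const Complex.continuous_im
      filter_upwards [hop.mem_nhds hz] with w hw
      rw [ih w hw, hVdef]
      simp [div_eq_inv_mul]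
    have hVdiff : DifferentiableAt ℝ V z := by
      apply DifferentiableAt.fun_sum hterm_diff
    have hw1 : wirtingerDeriv (smIter k f n) z = (P ^ n)⁻¹ * wirtingerDeriv V z := by
      rw [wirt_congr hcongr, wirt_const_mul _ hVdiff]
    have hw2 : wirtingerDeriv V z = ∑ r ∈ Finset.range (n + 1),
        ((acoef k n r * iteratedDeriv (r+1) f z) * X ^ ((r : ℤ) - (n : ℤ))
          + (acoef k n r * iteratedDeriv r f z) *
            ((((r : ℤ) - (n : ℤ)) : ℂ) * X ^ ((r : ℤ) - (n : ℤ) - 1))) := by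
      rw [hVdef, wirt_sum _ _ hterm_diff]
      apply Finset.sum_congr rfl
      intro r _
      rw [wirt_term hX ((hD r z hz).const_mul _)]
      rw [deriv_const_mul _ (hD r z hz), ← iteratedDeriv_succ]
      push_cast
      ring
    have hVz : V z = ∑ r ∈ Finset.range (n + 1),
        (acoef k n r * iteratedDeriv r f z) * X ^ ((r : ℤ) - (n : ℤ)) := rfl
    have hA : ((k:ℂ) + 2*n) * V z / X = ∑ r ∈ Finset.range (n+1),
        (acoef k n r * iteratedDeriv r f z) * (((k:ℂ) + 2*n) * X ^ ((r:ℤ) - (n:ℤ) - 1)) := by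
      rw [hVz, Finset.mul_sum, Finset.sum_div]
      refine Finset.sum_congr rfl fun r _ => ?_
      rw [zpow_sub_one₀ hX]
      ring
    have hB : wirtingerDeriv V z + ((k:ℂ)+2*n) * V z / X
        = ∑ r ∈ Finset.range (n+1+1),
            (acoef k n r * ((k:ℂ) + (n:ℂ) + (r:ℂ))) * iteratedDeriv r f z * X ^ ((r:ℤ)-(n:ℤ)-1)
          + ∑ r ∈ Finset.range (n+1),
            acoef k n r * iteratedDeriv (r+1) f z * X ^ ((r:ℤ)-(n:ℤ)) := by
      rw [hw2, hA, ← Finset.sum_add_distrib]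
      rw [Finset.sum_range_succ (fun r => (acoef k n r * ((k:ℂ) + (n:ℂ) + (r:ℂ))) *
        iteratedDeriv r f z * X ^ ((r:ℤ)-(n:ℤ)-1)) (n+1)]
      rw [show acoef k n (n+1) = 0 from by simp [acoef, Nat.choose_succ_self]]
      rw [zero_mul, zero_mul, zero_mul, add_zero, ← Finset.sum_add_distrib]
      exact Finset.sum_congr rfl fun r _ => by push_cast; ring
    have key : ∑ r ∈ Finset.range (n+1+1),
          acoef k (n+1) r * iteratedDeriv r f z * X ^ ((r:ℤ) - ((n:ℤ)+1))
        = ∑ r ∈ Finset.range (n+1+1),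
            (acoef k n r * ((k:ℂ) + (n:ℂ) + (r:ℂ))) * iteratedDeriv r f z * X ^ ((r:ℤ)-(n:ℤ)-1)
          + ∑ r ∈ Finset.range (n+1),
            acoef k n r * iteratedDeriv (r+1) f z * X ^ ((r:ℤ)-(n:ℤ)) := by
      rw [Finset.sum_range_succ' (fun r => acoef k (n+1) r * iteratedDeriv r f z *
        X ^ ((r:ℤ) - ((n:ℤ)+1))) (n+1)]
      rw [Finset.sum_range_succ' (fun r => (acoef k n r * ((k:ℂ) + (n:ℂ) + (r:ℂ))) *
        iteratedDeriv r f z * X ^ ((r:ℤ)-(n:ℤ)-1)) (n+1)]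
      have h0 : acoef k (n+1) 0 * iteratedDeriv 0 f z * X ^ (((0:ℕ):ℤ) - ((n:ℤ)+1))
          = (acoef k n 0 * ((k:ℂ) + (n:ℂ) + ((0:ℕ):ℂ))) * iteratedDeriv 0 f z
              * X ^ ((((0:ℕ)):ℤ)-(n:ℤ)-1) := by
        rw [coeff0, show (((0:ℕ):ℤ) - ((n:ℤ)+1)) = (((0:ℕ)):ℤ)-(n:ℤ)-1 from by push_cast; ring]
        push_cast
        ring
      have hstep : ∀ r ∈ Finset.range (n+1),
          acoef k (n+1) (r+1) * iteratedDeriv (r+1) f z * X ^ ((((r+1):ℕ):ℤ) - ((n:ℤ)+1))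
          = (acoef k n (r+1) * ((k:ℂ) + (n:ℂ) + (((r+1):ℕ):ℂ))) * iteratedDeriv (r+1) f z
              * X ^ ((((r+1):ℕ):ℤ)-(n:ℤ)-1)
            + acoef k n r * iteratedDeriv (r+1) f z * X ^ ((r:ℤ)-(n:ℤ)) := by
        intro r hr
        have hrn : r ≤ n := Nat.lt_succ_iff.mp (Finset.mem_range.mp hr)
        rw [show ((((r+1):ℕ):ℤ) - ((n:ℤ)+1)) = (r:ℤ)-(n:ℤ) from by push_cast; ring,
          show ((((r+1):ℕ):ℤ)-(n:ℤ)-1) = (r:ℤ)-(n:ℤ) from by push_cast; ring]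
        have hc := coeffsucc k n r hrn
        have hcast : ((k:ℂ) + (n:ℂ) + (((r+1):ℕ):ℂ)) = (k:ℂ) + (n:ℂ) + ((r:ℂ)+1) := by
          push_cast; ring
        rw [hcast]
        linear_combination (iteratedDeriv (r+1) f z * X ^ ((r:ℤ)-(n:ℤ))) * hc
      rw [Finset.sum_congr rfl hstep, Finset.sum_add_distrib, h0]
      ring
    -- final assembly
    have hsm : smIter k f (n+1) z = (1 / P) *
        (wirtingerDeriv (smIter k f n) z + ((k:ℂ) + 2*n) * smIter k f n z / X) := rfl
    rw [hsm, hw1, ih z hz, ← hXdef, ← hVz]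
    have hnum : ∑ r ∈ Finset.range (n+1+1),
        acoef k (n+1) r * iteratedDeriv r f z * X ^ ((r:ℤ) - ((n+1:ℕ):ℤ))
        = wirtingerDeriv V z + ((k:ℂ)+2*n) * V z / X := by
      rw [hB, ← key]
      refine Finset.sum_congr rfl fun r _ => ?_
      push_cast
      ring
    rw [hnum]
    ring


theorem smIter_eq_sum_iteratedDeriv (k : ℤ) (f : ℂ → ℂ)
    (hf : ∀ z : ℂ, 0 < z.im → DifferentiableAt ℂ f z)
    (n : ℕ) (z : ℂ) (hz : 0 < z.im) :
    smIter k f n z =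
      ∑ r ∈ Finset.range (n + 1),
        (n.choose r : ℂ) *
          ((ascPochhammer ℂ (n - r)).eval ((k : ℂ) + r) /
            (-4 * (Real.pi : ℂ) * (z.im : ℂ)) ^ (n - r)) *
          (iteratedDeriv r f z / (2 * (Real.pi : ℂ) * Complex.I) ^ r) := by
  rw [mainU k f hf n z hz, Finset.sum_div]
  refine Finset.sum_congr rfl fun r hr => ?_
  have hrn : r ≤ n := Nat.lt_succ_iff.mp (Finset.mem_range.mp hr)
  have hPX : (-4 * (Real.pi:ℂ) * (z.im:ℂ))
      = (2*(Real.pi:ℂ)*Complex.I) * (z - (starRingEnd ℂ) z) := by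
    rw [Complex.sub_conj]
    push_cast
    linear_combination (-4*(Real.pi:ℂ)*(z.im:ℂ)) * Complex.I_sq
  have hzp : (z - (starRingEnd ℂ) z) ^ ((r:ℤ) - (n:ℤ))
      = ((z - (starRingEnd ℂ) z) ^ (n - r))⁻¹ := by
    rw [show (r:ℤ) - (n:ℤ) = -((n - r : ℕ) : ℤ) from by omega, zpow_neg, zpow_natCast]
  have hP : (2*(Real.pi:ℂ)*Complex.I) ^ n
      = (2*(Real.pi:ℂ)*Complex.I) ^ (n-r) * (2*(Real.pi:ℂ)*Complex.I) ^ r := by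
    rw [← pow_add, Nat.sub_add_cancel hrn]
  simp only [acoef]
  rw [hzp, hP, hPX]
  simp only [div_eq_mul_inv, mul_inv, mul_pow]
  ring
end

section
/- For all integers 0 ≤ m ≤ n and every real number k, Σ_{r=m}^{n} (−1)^{n−r} · C(n,r) · C(r,m) · (k+r)_{n−r} · (k+m)_{r−m} equals 1 if n = m and equals 0 if n > m. (This expresses that the two triangular transition matrices between ordinary derivatives D^n f and Shimura–Maass derivatives ∂^n f are mutually inverse.) -/
theorem transition_matrices_inverse (k : ℝ) (m n : ℕ) (hmn : m ≤ n) :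
    ∑ r ∈ Finset.Icc m n,
        (-1 : ℝ) ^ (n - r) * (n.choose r : ℝ) * (r.choose m : ℝ) *
          (ascPochhammer ℝ (n - r)).eval (k + r) *
          (ascPochhammer ℝ (r - m)).eval (k + m) =
      if n = m then 1 else 0 := by
  set N := n - m with hN
  have hnm : n = m + N := by omega
  rw [← Finset.Ico_add_one_right_eq_Icc, Finset.sum_Ico_eq_sum_range]
  have hrange : n + 1 - m = N + 1 := by omega
  rw [hrange]
  have key : ∀ j ∈ Finset.range (N + 1),
      (-1 : ℝ) ^ (n - (m + j)) * (n.choose (m + j) : ℝ) * ((m + j).choose m : ℝ) *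
          (ascPochhammer ℝ (n - (m + j))).eval (k + ↑(m + j)) *
          (ascPochhammer ℝ (m + j - m)).eval (k + m) =
      (n.choose m : ℝ) * (ascPochhammer ℝ N).eval (k + m) *
        ((-1 : ℝ) ^ (N - j) * (N.choose j : ℝ)) := by
    intro j hj
    rw [Finset.mem_range] at hj
    have hjN : j ≤ N := by omega
    have h1 : n - (m + j) = N - j := by omega
    have h2 : m + j - m = j := by omega
    have hchoose : n.choose (m + j) * (m + j).choose m = n.choose m * N.choose j := by
      have := Nat.choose_mul (n := n) (show m ≤ m + j by omega)
      simpa [h1, h2, hN] using this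
    have hpoch : (ascPochhammer ℝ j).eval (k + m) *
        (ascPochhammer ℝ (N - j)).eval (k + m + j) = (ascPochhammer ℝ N).eval (k + m) := by
      have := congrArg (Polynomial.eval (k + m)) (ascPochhammer_mul (S := ℝ) j (N - j))
      simp only [Polynomial.eval_mul, Polynomial.eval_comp, Polynomial.eval_add,
        Polynomial.eval_X, Polynomial.eval_natCast] at this
      rw [this, Nat.add_sub_cancel' hjN]
    have hcast : (k + ↑(m + j) : ℝ) = k + m + j := by push_cast; ring
    rw [h1, h2, hcast]
    have hc : (n.choose (m + j) : ℝ) * ((m + j).choose m : ℝ) =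
        (n.choose m : ℝ) * (N.choose j : ℝ) := by exact_mod_cast congrArg Nat.cast hchoose
    calc (-1 : ℝ) ^ (N - j) * (n.choose (m + j) : ℝ) * ((m + j).choose m : ℝ) *
          (ascPochhammer ℝ (N - j)).eval (k + m + j) * (ascPochhammer ℝ j).eval (k + m)
        = (-1 : ℝ) ^ (N - j) * ((n.choose (m + j) : ℝ) * ((m + j).choose m : ℝ)) *
          ((ascPochhammer ℝ j).eval (k + m) * (ascPochhammer ℝ (N - j)).eval (k + m + j)) := by
          ring
      _ = _ := by rw [hc, hpoch]; ring
  rw [Finset.sum_congr rfl key, ← Finset.mul_sum]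
  have hsum : ∑ j ∈ Finset.range (N + 1), ((-1 : ℝ) ^ (N - j) * (N.choose j : ℝ)) =
      if N = 0 then 1 else 0 := by
    have := Int.alternating_sum_range_choose (n := N)
    have h2 : ∑ j ∈ Finset.range (N + 1), ((-1 : ℝ) ^ j * (N.choose j : ℝ)) =
        if N = 0 then 1 else 0 := by exact_mod_cast congrArg (Int.cast : ℤ → ℝ) this
    rw [← h2, ← Finset.sum_range_reflect]
    apply Finset.sum_congr rfl
    intro j hj
    rw [Finset.mem_range] at hj
    have e1 : N + 1 - 1 - j = N - j := by omega
    have e2 : N - (N - j) = j := by omega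
    rw [e1, e2, Nat.choose_symm (by omega)]
  rw [hsum]
  by_cases h : N = 0
  · have hnm' : n = m := by omega
    simp [h, hnm', ascPochhammer_zero]
  · have hnm' : n ≠ m := by omega
    simp [h, hnm']
end

section
/- Let k ∈ ℤ, let p ∈ ℍ with y = Im p, and for z ∈ ℍ write w = w(p;z) and s_n(z) = Σ_{t=0}^{n} (−1)^{n−t}·C(n,t)·(1−w)^t/(y^t·(Im z)^{n−t}). Then for all integers 0 ≤ r ≤ m and all z ∈ ℍ, (1/(2πi))·(∂_z s_{m−r})(z) + (k+2r)·s_{m−r}(z)·(1−w)/(4πy) − (k+2m)·s_{m−r}(z)/(4π·Im z) = ((k+m+r)/(4π))·s_{m+1−r}(z). -/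
open Complex

set_option maxHeartbeats 1600000

/-- The map `w(p; ·) : z ↦ (z − p)/(z − conj p)` from the upper half-plane to the unit disc. -/
noncomputable def wmap (p z : ℂ) : ℂ := (z - p) / (z - (starRingEnd ℂ) p)

/-- The auxiliary function `s_n(z) = Σ_{t=0}^n (−1)^{n−t} C(n,t) (1−w)^t/(y^t (Im z)^{n−t})`
where `w = w(p;z)` and `y = Im p`. -/
noncomputable def sfun (p : ℂ) (n : ℕ) (z : ℂ) : ℂ :=
  ∑ t ∈ Finset.range (n + 1),
    (-1) ^ (n - t) * (n.choose t : ℂ) * (1 - wmap p z) ^ t /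
      ((p.im : ℂ) ^ t * (z.im : ℂ) ^ (n - t))

lemma sfun_closed (p : ℂ) (n : ℕ) (z : ℂ) :
    sfun p n z = ((1 - wmap p z) / (p.im : ℂ) - ((z.im : ℂ))⁻¹) ^ n := by
  rw [sfun, sub_eq_add_neg ((1 - wmap p z) / (p.im : ℂ)), add_pow]
  refine Finset.sum_congr rfl fun t ht => ?_
  rw [div_pow]
  ring

lemma wirtinger_pow (p : ℂ) (hp : 0 < p.im) (z : ℂ) (hz : 0 < z.im) (n : ℕ) :
    wirtingerDeriv (fun z => ((1 - wmap p z) / (p.im : ℂ) - ((z.im : ℂ))⁻¹) ^ n) z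
      = (n : ℂ) * ((1 - wmap p z) / (p.im : ℂ) - ((z.im : ℂ))⁻¹) ^ (n - 1) * (I / 2) *
        (((1 - wmap p z) / (p.im : ℂ)) ^ 2 - (((z.im : ℂ))⁻¹) ^ 2) := by
  have hy : (p.im : ℂ) ≠ 0 := by exact_mod_cast hp.ne'
  have hY : (z.im : ℂ) ≠ 0 := by exact_mod_cast hz.ne'
  have hD : z - (starRingEnd ℂ) p ≠ 0 := by
    intro h
    have h2 : (z - (starRingEnd ℂ) p).im = 0 := by rw [h]; simp
    rw [Complex.sub_im, Complex.conj_im] at h2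
    nlinarith
  set D := z - (starRingEnd ℂ) p with hDdef
  have hnum : HasDerivAt (fun z : ℂ => z - p) 1 z := (hasDerivAt_id z).sub_const p
  have hden : HasDerivAt (fun z : ℂ => z - (starRingEnd ℂ) p) 1 z :=
    (hasDerivAt_id z).sub_const _
  have hw : HasDerivAt (wmap p) ((1 * D - (z - p) * 1) / D ^ 2) z := hnum.div hden hD
  have hu : HasDerivAt (fun z : ℂ => (1 - wmap p z) / (p.im : ℂ))
      ((0 - (1 * D - (z - p) * 1) / D ^ 2) / (p.im : ℂ)) z :=
    ((hasDerivAt_const z (1:ℂ)).sub hw).div_const _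
  have huR := hu.hasFDerivAt.restrictScalars ℝ
  have him : HasFDerivAt (fun z : ℂ => (z.im : ℂ))
      (Complex.ofRealCLM.comp Complex.imCLM) z :=
    (Complex.ofRealCLM.comp Complex.imCLM).hasFDerivAt
  have hinv : HasDerivAt (fun w : ℂ => w⁻¹) (-(((z.im : ℂ)) ^ 2)⁻¹) ((z.im : ℂ)) :=
    hasDerivAt_inv hY
  have hinvR := (hinv.hasFDerivAt.restrictScalars ℝ).comp z him
  have hg := huR.sub hinvR
  have hpow : HasDerivAt (fun w : ℂ => w ^ n)
      ((n : ℂ) * ((1 - wmap p z) / (p.im : ℂ) - ((z.im : ℂ))⁻¹) ^ (n - 1))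
      ((1 - wmap p z) / (p.im : ℂ) - ((z.im : ℂ))⁻¹) := hasDerivAt_pow n _
  have hf := (hpow.hasFDerivAt.restrictScalars ℝ).comp z hg
  have hf' : HasFDerivAt
      (fun z : ℂ => ((1 - wmap p z) / (p.im : ℂ) - ((z.im : ℂ))⁻¹) ^ n) _ z := hf
  rw [wirtingerDeriv, hf'.fderiv]
  simp only [ContinuousLinearMap.coe_comp', Function.comp_apply,
    ContinuousLinearMap.coe_restrictScalars', ContinuousLinearMap.coe_sub',
    Pi.sub_apply, ContinuousLinearMap.smulRight_apply, ContinuousLinearMap.one_apply,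
    Complex.ofRealCLM_apply, Complex.imCLM_apply, Complex.one_im, Complex.I_im,
    Complex.ofReal_zero, Complex.ofReal_one, smul_eq_mul]
  -- now use 1 - wmap p z = (D - (z - p))/D and D - (z - p) = 2 p.im I
  have hc : D - (z - p) = 2 * (p.im : ℂ) * I := by
    have := Complex.sub_conj p
    rw [hDdef]
    push_cast at this ⊢
    linear_combination this
  have h1w : 1 - wmap p z = 2 * (p.im : ℂ) * I / D := by
    rw [wmap, ← hDdef, eq_div_iff hD, sub_mul, div_mul_cancel₀ _ hD]
    linear_combination hc
  have ha : (0 - (1 * D - (z - p) * 1) / D ^ 2) / (p.im : ℂ)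
      = (I / 2) * ((1 - wmap p z) / (p.im : ℂ)) ^ 2 := by
    have hc' : 1 * D - (z - p) * 1 = 2 * (p.im : ℂ) * I := by linear_combination hc
    have hI3 : I ^ 3 = -I := by rw [pow_succ, Complex.I_sq]; ring
    rw [hc', h1w]
    field_simp
    ring_nf
    simp only [hI3]
    ring
  rw [ha]
  have hI3 : I ^ 3 = -I := by rw [pow_succ, Complex.I_sq]; ring
  set C : ℂ := ((1 - wmap p z) / (p.im : ℂ) - ((z.im : ℂ))⁻¹) ^ (n - 1) with hC
  simp only [ContinuousLinearMap.toSpanSingleton_apply, smul_eq_mul]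
  ring_nf
  simp only [hI3]
  ring

theorem sfun_recurrence (k : ℤ) (p : ℂ) (hp : 0 < p.im)
    (m r : ℕ) (hrm : r ≤ m) (z : ℂ) (hz : 0 < z.im) :
    (1 / (2 * (Real.pi : ℂ) * Complex.I)) * wirtingerDeriv (sfun p (m - r)) z +
        ((k : ℂ) + 2 * r) * sfun p (m - r) z * (1 - wmap p z) /
          (4 * (Real.pi : ℂ) * (p.im : ℂ)) -
        ((k : ℂ) + 2 * m) * sfun p (m - r) z / (4 * (Real.pi : ℂ) * (z.im : ℂ)) =
      (((k : ℂ) + m + r) / (4 * (Real.pi : ℂ))) * sfun p (m + 1 - r) z := by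
  have hy : (p.im : ℂ) ≠ 0 := by exact_mod_cast hp.ne'
  have hY : (z.im : ℂ) ≠ 0 := by exact_mod_cast hz.ne'
  have hπ : (Real.pi : ℂ) ≠ 0 := by exact_mod_cast Real.pi_ne_zero
  have hsf : sfun p (m - r) = fun z => ((1 - wmap p z) / (p.im : ℂ) - ((z.im : ℂ))⁻¹) ^ (m - r) :=
    funext (sfun_closed p (m - r))
  have hsucc : m + 1 - r = (m - r) + 1 := by omega
  rw [hsucc, hsf, wirtinger_pow p hp z hz, sfun_closed]
  beta_reduce
  have hm : (m : ℂ) = ((m - r : ℕ) : ℂ) + r := by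
    rw [← Nat.cast_add, Nat.sub_add_cancel hrm]
  rw [hm]
  have hI : ∀ a q : ℂ, 1 / (2 * (Real.pi : ℂ) * I) * (a * (I / 2) * q)
      = a * q / (4 * (Real.pi : ℂ)) := by
    intro a q
    rw [div_mul_eq_mul_div, div_eq_div_iff (by
        simp [hπ, Complex.I_ne_zero, mul_ne_zero]) (by
        simp [hπ])]
    ring
  rw [hI]
  set A : ℂ := (1 - wmap p z) / (p.im : ℂ) - ((z.im : ℂ))⁻¹ with hA
  obtain h0 | ⟨s, hs⟩ : m - r = 0 ∨ ∃ s, m - r = s + 1 := by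
    rcases Nat.eq_zero_or_pos (m - r) with h | h
    · exact Or.inl h
    · exact Or.inr ⟨m - r - 1, by omega⟩
  · rw [h0]
    push_cast
    simp only [pow_zero, pow_one, zero_mul, mul_zero, zero_div, zero_add]
    ring
  · rw [hs]
    simp only [Nat.add_sub_cancel]
    push_cast
    rw [pow_succ A (s + 1), pow_succ A s]
    ring
end
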